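/- Let E be an elliptic curve over ℚ (or any field) and P a point of infinite order (or order > 3). Then the sequence W(n) = ψ_n(P) of division polynomial values satisfies the elliptic net recurrence: for all p, q, r, s ∈ ℤ, W(p+q+s)W(p−q)W(r+s)W(r) + W(q+r+s)W(q−r)W(p+s)W(p) + W(r+p+s)W(r−p)W(q+s)W(q) = 0. -/

import Mathlib

open Polynomial WeierstrassCurve

section EDSMachinery

variable {F : Type*} [Field F]

/-- `dd W x y = f x * e y - f y * e x` where `e n = W n ^ 2`, `f n = W (n+1) * W (n-1)`. -/
private def dd (W : ℤ → F) (x y : ℤ) : F :=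
  (W (x + 1) * W (x - 1)) * (W y * W y) - (W (y + 1) * W (y - 1)) * (W x * W x)

/-- `d2 W x y = f₂ x * e₂ y - f₂ y * e₂ x` where `e₂ n = W (n+1) * W n`,
`f₂ n = W (n+2) * W (n-1)`. -/
private def d2 (W : ℤ → F) (x y : ℤ) : F :=
  (W (x + 2) * W (x - 1)) * (W (y + 1) * W y) - (W (y + 2) * W (y - 1)) * (W (x + 1) * W x)

private lemma pl (W : ℤ → F) (x1 x2 y1 y2 : ℤ) :
    dd W x1 y1 * dd W x2 y2 - dd W x1 y2 * dd W x2 y1 = dd W x1 x2 * dd W y1 y2 := by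
  simp only [dd]; ring

private lemma pl2 (W : ℤ → F) (x1 x2 y1 y2 : ℤ) :
    d2 W x1 y1 * d2 W x2 y2 - d2 W x1 y2 * d2 W x2 y1 = d2 W x1 x2 * d2 W y1 y2 := by
  simp only [d2]; ring

private lemma d2diag (W : ℤ → F) (x : ℤ) : d2 W x (x - 1) = dd W (x + 1) (x - 1) := by
  simp only [d2, dd]
  rw [show x - 1 + 2 = x + 1 by ring, show x - 1 - 1 = x - 2 by ring,
    show x - 1 + 1 = x by ring, show x + 1 + 1 = x + 2 by ring, show x + 1 - 1 = x by ring]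
  ring

/-- The full elliptic net identity for a sequence satisfying the `normEDS` recurrences. -/
private theorem net_main (W : ℤ → F) (h0 : W 0 = 0) (h1 : W 1 = 1)
    (hneg : ∀ n : ℤ, W (-n) = -W n) (hb : W 2 ≠ 0)
    (hE : ∀ m : ℤ, W (2 * m) * W 2 =
      W (m - 1) ^ 2 * W m * W (m + 2) - W (m - 2) * W m * W (m + 1) ^ 2)
    (hO : ∀ m : ℤ, W (2 * m + 1) = W (m + 2) * W m ^ 3 - W (m - 1) * W (m + 1) ^ 3)
    (p q r s : ℤ) :
    W (p + q + s) * W (p - q) * W (r + s) * W r +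
      W (q + r + s) * W (q - r) * W (p + s) * W p +
      W (r + p + s) * W (r - p) * W (q + s) * W q = 0 := by
  have hm1 : W (-1) = -1 := by rw [hneg 1, h1]
  -- the doubling recurrences in `dd` form
  have hE' : ∀ m : ℤ, W (2 * m) * W 2 = dd W (m + 1) (m - 1) := by
    intro m
    simp only [dd]
    rw [show m + 1 + 1 = m + 2 by ring, show m + 1 - 1 = m by ring,
      show m - 1 + 1 = m by ring, show m - 1 - 1 = m - 2 by ring]
    linear_combination hE m
  have hO' : ∀ m : ℤ, W (2 * m + 1) = dd W (m + 1) m := by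
    intro m
    simp only [dd]
    rw [show m + 1 + 1 = m + 2 by ring, show m + 1 - 1 = m by ring]
    linear_combination hO m
  have dd20 : dd W 2 0 = W 2 * W 2 := by
    simp only [dd]
    rw [show (0 : ℤ) + 1 = 1 by norm_num, show (0 : ℤ) - 1 = -1 by norm_num, h0, h1, hm1]
    ring
  -- the main simultaneous strong induction
  have main : ∀ n : ℕ,
      (∀ k l : ℤ, 0 ≤ l → l ≤ k → k + l = (n : ℤ) → W (k + l) * W (k - l) = dd W k l) ∧
      (∀ k l : ℤ, 0 ≤ l → l ≤ k → k + l + 1 = (n : ℤ) →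
        W (k + l + 1) * W (k - l) * W 2 = d2 W k l) := by
    intro n
    induction n using Nat.strong_induction_on with
    | _ n IH =>
    have getS : ∀ k l : ℤ, 0 ≤ l → l ≤ k → k + l < (n : ℤ) →
        W (k + l) * W (k - l) = dd W k l := by
      intro k l hl hlk hn
      exact (IH (k + l).toNat (by omega)).1 k l hl hlk (by omega)
    have getT : ∀ k l : ℤ, 0 ≤ l → l ≤ k → k + l + 1 < (n : ℤ) →
        W (k + l + 1) * W (k - l) * W 2 = d2 W k l := by
      intro k l hl hlk hn
      exact (IH (k + l + 1).toNat (by omega)).2 k l hl hlk (by omega)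
    constructor
    · -- the S-statements at level n
      intro k l hl hlk hkl
      rcases eq_or_lt_of_le hl with hl0 | hl1
      · -- l = 0
        rw [← hl0]
        simp only [dd]
        rw [show (0 : ℤ) + 1 = 1 by norm_num, show (0 : ℤ) - 1 = -1 by norm_num,
          add_zero, sub_zero, h0, h1, hm1]
        ring
      rcases eq_or_lt_of_le (show (1 : ℤ) ≤ l by omega) with hl1' | hl2
      · -- l = 1
        rw [← hl1']
        simp only [dd]
        rw [show (1 : ℤ) + 1 = 2 by norm_num, show (1 : ℤ) - 1 = 0 by norm_num, h0, h1]
        ring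
      rcases eq_or_lt_of_le hlk with hlk' | hltk
      · -- l = k
        have hddkk : dd W k k = 0 := by simp only [dd]; ring
        rw [hlk', sub_self, h0, mul_zero, hddkk]
      -- now 2 ≤ l < k
      rcases Int.even_or_odd (k + l) with ⟨m, hm⟩ | ⟨m, hm⟩
      · -- k + l = 2m : even case, via T-instances at lower level
        set t := k - m with ht
        have hT1 : W (k + 1) * W l * W 2 = d2 W m t := by
          have h := getT m t (by omega) (by omega) (by omega)
          rw [show m + t + 1 = k + 1 by omega, show m - t = l by omega] at h
          exact h
        have hT2 : W (k - 1) * W l * W 2 = d2 W (m - 1) (t - 1) := by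
          have h := getT (m - 1) (t - 1) (by omega) (by omega) (by omega)
          rw [show m - 1 + (t - 1) + 1 = k - 1 by omega, show m - 1 - (t - 1) = l by omega] at h
          exact h
        have hT3 : W k * W (l + 1) * W 2 = d2 W m (t - 1) := by
          have h := getT m (t - 1) (by omega) (by omega) (by omega)
          rw [show m + (t - 1) + 1 = k by omega, show m - (t - 1) = l + 1 by omega] at h
          exact h
        have hT4 : W k * W (l - 1) * W 2 = d2 W (m - 1) t := by
          have h := getT (m - 1) t (by omega) (by omega) (by omega)
          rw [show m - 1 + t + 1 = k by omega, show m - 1 - t = l - 1 by omega] at h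
          exact h
        have key : dd W k l * (W 2 * W 2) = (W (k + l) * W (k - l)) * (W 2 * W 2) := by
          calc dd W k l * (W 2 * W 2)
              = (W (k + 1) * W l * W 2) * (W (k - 1) * W l * W 2) -
                (W k * W (l + 1) * W 2) * (W k * W (l - 1) * W 2) := by
                simp only [dd]; ring
            _ = d2 W m t * d2 W (m - 1) (t - 1) - d2 W m (t - 1) * d2 W (m - 1) t := by
                rw [hT1, hT2, hT3, hT4]
            _ = d2 W m (m - 1) * d2 W t (t - 1) := pl2 W m (m - 1) t (t - 1)
            _ = dd W (m + 1) (m - 1) * dd W (t + 1) (t - 1) := by rw [d2diag, d2diag]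
            _ = (W (2 * m) * W 2) * (W (2 * t) * W 2) := by rw [← hE' m, ← hE' t]
            _ = (W (k + l) * W (k - l)) * (W 2 * W 2) := by
                rw [show 2 * m = k + l by omega, show 2 * t = k - l by omega]; ring
        exact (mul_right_cancel₀ (mul_ne_zero hb hb) key).symm
      · -- k + l = 2m + 1 : odd case, via S-instances at lower level
        set t := k - m with ht
        have hS1 : W (k + 1) * W l = dd W (m + 1) t := by
          have h := getS (m + 1) t (by omega) (by omega) (by omega)
          rw [show m + 1 + t = k + 1 by omega, show m + 1 - t = l by omega] at h
          exact h
        have hS2 : W (k - 1) * W l = dd W m (t - 1) := by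
          have h := getS m (t - 1) (by omega) (by omega) (by omega)
          rw [show m + (t - 1) = k - 1 by omega, show m - (t - 1) = l by omega] at h
          exact h
        have hS3 : W k * W (l + 1) = dd W (m + 1) (t - 1) := by
          have h := getS (m + 1) (t - 1) (by omega) (by omega) (by omega)
          rw [show m + 1 + (t - 1) = k by omega, show m + 1 - (t - 1) = l + 1 by omega] at h
          exact h
        have hS4 : W k * W (l - 1) = dd W m t := by
          have h := getS m t (by omega) (by omega) (by omega)
          rw [show m + t = k by omega, show m - t = l - 1 by omega] at h
          exact h
        calc W (k + l) * W (k - l) = W (2 * m + 1) * W (2 * (t - 1) + 1) := by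
              rw [show 2 * m + 1 = k + l by omega, show 2 * (t - 1) + 1 = k - l by omega]
          _ = dd W (m + 1) m * dd W t (t - 1) := by
              rw [hO' m, hO' (t - 1), show t - 1 + 1 = t by ring]
          _ = dd W (m + 1) t * dd W m (t - 1) - dd W (m + 1) (t - 1) * dd W m t :=
              (pl W (m + 1) m t (t - 1)).symm
          _ = (W (k + 1) * W l) * (W (k - 1) * W l) - (W k * W (l + 1)) * (W k * W (l - 1)) := by
              rw [hS1, hS2, hS3, hS4]
          _ = dd W k l := by simp only [dd]; ring
    · -- the T-statements at level n
      intro k l hl hlk hkl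
      rcases eq_or_lt_of_le hl with hl0 | hl1
      · -- l = 0
        rw [← hl0]
        simp only [d2]
        rw [show (0 : ℤ) + 1 = 1 by norm_num, show (0 : ℤ) - 1 = -1 by norm_num,
          show (0 : ℤ) + 2 = 2 by norm_num, add_zero, sub_zero, h0, h1, hm1]
        ring
      rcases eq_or_lt_of_le (show (1 : ℤ) ≤ l by omega) with hl1' | hl2
      · -- l = 1
        rw [← hl1']
        simp only [d2]
        rw [show (1 : ℤ) + 1 = 2 by norm_num, show (1 : ℤ) - 1 = 0 by norm_num,
          show (1 : ℤ) + 2 = 3 by norm_num, h0, h1]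
        ring
      rcases eq_or_lt_of_le hlk with hlk' | hltk
      · -- l = k
        have hd : d2 W k k = 0 := by simp only [d2]; ring
        rw [hlk', sub_self, h0, hd]
        ring
      -- now 2 ≤ l < k
      rcases Int.even_or_odd (k + l) with ⟨m, hm⟩ | ⟨m, hm⟩
      · -- k + l = 2m : even case, needs the special lemma for d2 (m+1) (m-1)
        set t := k - m with ht
        have hspec : d2 W (m + 1) (m - 1) = W (2 * m + 1) * (W 2 * W 2) := by
          have hA : W (m + 3) * W (m - 1) = dd W (m + 1) 2 := by
            have h := getS (m + 1) 2 (by omega) (by omega) (by omega)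
            rw [show m + 1 + 2 = m + 3 by ring, show m + 1 - 2 = m - 1 by ring] at h
            exact h
          have hB : W m * W m = dd W m 0 := by
            have h := getS m 0 (by omega) (by omega) (by omega)
            rw [add_zero, sub_zero] at h
            exact h
          have hC : W (m + 2) * W (m - 2) = dd W m 2 := by
            have h := getS m 2 (by omega) (by omega) (by omega)
            exact h
          have hD : W (m + 1) * W (m + 1) = dd W (m + 1) 0 := by
            have h := getS (m + 1) 0 (by omega) (by omega) (by omega)
            rw [add_zero, sub_zero] at h
            exact h
          calc d2 W (m + 1) (m - 1)
              = (W (m + 3) * W (m - 1)) * (W m * W m) -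
                (W (m + 2) * W (m - 2)) * (W (m + 1) * W (m + 1)) := by
                simp only [d2]
                rw [show m + 1 + 2 = m + 3 by ring, show m + 1 - 1 = m by ring,
                  show m - 1 + 1 = m by ring, show m - 1 + 2 = m + 1 by ring,
                  show m - 1 - 1 = m - 2 by ring, show m + 1 + 1 = m + 2 by ring]
                ring
            _ = dd W (m + 1) 2 * dd W m 0 - dd W (m + 1) 0 * dd W m 2 := by
                rw [hA, hB, hC, hD]; ring
            _ = dd W (m + 1) m * dd W 2 0 := pl W (m + 1) m 2 0
            _ = W (2 * m + 1) * (W 2 * W 2) := by rw [← hO' m, dd20]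
        have hT1 : W (k + 2) * W (l + 1) * W 2 = d2 W (m + 1) t := by
          have h := getT (m + 1) t (by omega) (by omega) (by omega)
          rw [show m + 1 + t + 1 = k + 2 by omega, show m + 1 - t = l + 1 by omega] at h
          exact h
        have hT2 : W (k - 1) * W l * W 2 = d2 W (m - 1) (t - 1) := by
          have h := getT (m - 1) (t - 1) (by omega) (by omega) (by omega)
          rw [show m - 1 + (t - 1) + 1 = k - 1 by omega, show m - 1 - (t - 1) = l by omega] at h
          exact h
        have hT3 : W (k + 1) * W (l + 2) * W 2 = d2 W (m + 1) (t - 1) := by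
          have h := getT (m + 1) (t - 1) (by omega) (by omega) (by omega)
          rw [show m + 1 + (t - 1) + 1 = k + 1 by omega,
            show m + 1 - (t - 1) = l + 2 by omega] at h
          exact h
        have hT4 : W k * W (l - 1) * W 2 = d2 W (m - 1) t := by
          have h := getT (m - 1) t (by omega) (by omega) (by omega)
          rw [show m - 1 + t + 1 = k by omega, show m - 1 - t = l - 1 by omega] at h
          exact h
        have key : d2 W k l * (W 2 * W 2) = (W (k + l + 1) * W (k - l) * W 2) * (W 2 * W 2) := by
          calc d2 W k l * (W 2 * W 2)
              = (W (k + 2) * W (l + 1) * W 2) * (W (k - 1) * W l * W 2) -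
                (W (k + 1) * W (l + 2) * W 2) * (W k * W (l - 1) * W 2) := by
                simp only [d2]; ring
            _ = d2 W (m + 1) t * d2 W (m - 1) (t - 1) -
                d2 W (m + 1) (t - 1) * d2 W (m - 1) t := by
                rw [hT1, hT2, hT3, hT4]
            _ = d2 W (m + 1) (m - 1) * d2 W t (t - 1) := pl2 W (m + 1) (m - 1) t (t - 1)
            _ = (W (2 * m + 1) * (W 2 * W 2)) * dd W (t + 1) (t - 1) := by
                rw [hspec, d2diag]
            _ = (W (2 * m + 1) * (W 2 * W 2)) * (W (2 * t) * W 2) := by rw [← hE' t]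
            _ = (W (k + l + 1) * W (k - l) * W 2) * (W 2 * W 2) := by
                rw [show 2 * m + 1 = k + l + 1 by omega, show 2 * t = k - l by omega]; ring
        exact (mul_right_cancel₀ (mul_ne_zero hb hb) key).symm
      · -- k + l = 2m + 1 : odd case, via S-instances
        set t := k - m - 1 with ht
        have hS1 : W (k + 2) * W (l + 1) = dd W (m + 2) (t + 1) := by
          have h := getS (m + 2) (t + 1) (by omega) (by omega) (by omega)
          rw [show m + 2 + (t + 1) = k + 2 by omega, show m + 2 - (t + 1) = l + 1 by omega] at h
          exact h
        have hS2 : W (k - 1) * W l = dd W m t := by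
          have h := getS m t (by omega) (by omega) (by omega)
          rw [show m + t = k - 1 by omega, show m - t = l by omega] at h
          exact h
        have hS3 : W (k + 1) * W (l + 2) = dd W (m + 2) t := by
          have h := getS (m + 2) t (by omega) (by omega) (by omega)
          rw [show m + 2 + t = k + 1 by omega, show m + 2 - t = l + 2 by omega] at h
          exact h
        have hS4 : W k * W (l - 1) = dd W m (t + 1) := by
          have h := getS m (t + 1) (by omega) (by omega) (by omega)
          rw [show m + (t + 1) = k by omega, show m - (t + 1) = l - 1 by omega] at h
          exact h
        calc W (k + l + 1) * W (k - l) * W 2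
            = (W (2 * (m + 1)) * W 2) * W (2 * t + 1) := by
              rw [show 2 * (m + 1) = k + l + 1 by omega, show 2 * t + 1 = k - l by omega]
              ring
          _ = dd W (m + 2) m * dd W (t + 1) t := by
              rw [hE' (m + 1), ← hO' t, show m + 1 + 1 = m + 2 by ring,
                show m + 1 - 1 = m by ring]
          _ = dd W (m + 2) (t + 1) * dd W m t - dd W (m + 2) t * dd W m (t + 1) :=
              (pl W (m + 2) m (t + 1) t).symm
          _ = (W (k + 2) * W (l + 1)) * (W (k - 1) * W l) -
              (W (k + 1) * W (l + 2)) * (W k * W (l - 1)) := by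
              rw [hS1, hS2, hS3, hS4]
          _ = d2 W k l := by simp only [d2]; ring
  -- extract the normalized statements
  have Score : ∀ k l : ℤ, 0 ≤ l → l ≤ k → W (k + l) * W (k - l) = dd W k l := by
    intro k l hl hlk
    exact (main (k + l).toNat).1 k l hl hlk (by omega)
  have Tcore : ∀ k l : ℤ, 0 ≤ l → l ≤ k → W (k + l + 1) * W (k - l) * W 2 = d2 W k l := by
    intro k l hl hlk
    exact (main (k + l + 1).toNat).2 k l hl hlk (by omega)
  -- symmetry lemmas
  have ffneg : ∀ x : ℤ, W (-x + 1) * W (-x - 1) = W (x + 1) * W (x - 1) := by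
    intro x
    rw [show -x + 1 = -(x - 1) by ring, show -x - 1 = -(x + 1) by ring, hneg, hneg]
    ring
  have ddnegr : ∀ x y : ℤ, dd W x (-y) = dd W x y := by
    intro x y
    simp only [dd]
    rw [ffneg y, hneg y]
    ring
  have ddnegl : ∀ x y : ℤ, dd W (-x) y = dd W x y := by
    intro x y
    simp only [dd]
    rw [ffneg x, hneg x]
    ring
  have ddswap : ∀ x y : ℤ, dd W y x = -dd W x y := by
    intro x y; simp only [dd]; ring
  have e2neg : ∀ x : ℤ, W (-x - 1 + 1) * W (-x - 1) = W (x + 1) * W x := by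
    intro x
    rw [show -x - 1 + 1 = -x by ring, show -x - 1 = -(x + 1) by ring, hneg, hneg]
    ring
  have f2neg : ∀ x : ℤ, W (-x - 1 + 2) * W (-x - 1 - 1) = W (x + 2) * W (x - 1) := by
    intro x
    rw [show -x - 1 + 2 = -(x - 1) by ring, show -x - 1 - 1 = -(x + 2) by ring, hneg, hneg]
    ring
  have d2negr : ∀ x y : ℤ, d2 W x (-y - 1) = d2 W x y := by
    intro x y
    simp only [d2]
    rw [e2neg y, f2neg y]
  have d2negl : ∀ x y : ℤ, d2 W (-x - 1) y = d2 W x y := by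
    intro x y
    simp only [d2]
    rw [e2neg x, f2neg x]
  have d2swap : ∀ x y : ℤ, d2 W y x = -d2 W x y := by
    intro x y; simp only [d2]; ring
  -- the fully general statements over ℤ
  have SA : ∀ k l : ℤ, 0 ≤ k → 0 ≤ l → W (k + l) * W (k - l) = dd W k l := by
    intro k l hk hl
    rcases le_total l k with h | h
    · exact Score k l hl h
    · have h2 := Score l k hk h
      rw [show l + k = k + l by ring, show l - k = -(k - l) by ring, hneg, ddswap] at h2
      linear_combination -h2
  have SB : ∀ k l : ℤ, 0 ≤ k → W (k + l) * W (k - l) = dd W k l := by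
    intro k l hk
    rcases le_total 0 l with h | h
    · exact SA k l hk h
    · have h2 := SA k (-l) hk (by omega)
      rw [show k + -l = k - l by ring, show k - -l = k + l by ring, ddnegr] at h2
      linear_combination h2
  have Sfull : ∀ k l : ℤ, W (k + l) * W (k - l) = dd W k l := by
    intro k l
    rcases le_total 0 k with h | h
    · exact SB k l h
    · have h2 := SB (-k) l (by omega)
      rw [show -k + l = -(k - l) by ring, show -k - l = -(k + l) by ring, hneg, hneg,
        ddnegl] at h2
      linear_combination h2
  have TA : ∀ k l : ℤ, 0 ≤ k → 0 ≤ l → W (k + l + 1) * W (k - l) * W 2 = d2 W k l := by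
    intro k l hk hl
    rcases le_total l k with h | h
    · exact Tcore k l hl h
    · have h2 := Tcore l k hk h
      rw [show l + k + 1 = k + l + 1 by ring, show l - k = -(k - l) by ring, hneg,
        d2swap] at h2
      linear_combination -h2
  have TB : ∀ k l : ℤ, 0 ≤ k → W (k + l + 1) * W (k - l) * W 2 = d2 W k l := by
    intro k l hk
    rcases le_or_gt 0 l with h | h
    · exact TA k l hk h
    · have h2 := TA k (-l - 1) hk (by omega)
      rw [show k + (-l - 1) + 1 = k - l by ring, show k - (-l - 1) = k + l + 1 by ring,
        d2negr] at h2
      linear_combination h2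
  have Tfull : ∀ k l : ℤ, W (k + l + 1) * W (k - l) * W 2 = d2 W k l := by
    intro k l
    rcases le_or_gt 0 k with h | h
    · exact TB k l h
    · have h2 := TB (-k - 1) l (by omega)
      rw [show -k - 1 + l + 1 = -(k - l) by ring, show -k - 1 - l = -(k + l + 1) by ring,
        hneg, hneg, d2negl] at h2
      linear_combination h2
  -- final assembly
  set t := s / 2 with htdef
  have hmod : 2 * (s / 2) + s % 2 = s := Int.mul_ediv_add_emod s 2
  rcases Int.emod_two_eq_zero_or_one s with hpar | hpar
  · -- s even
    have h1' : W (p + q + s) * W (p - q) = dd W (p + t) (q + t) := by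
      have h := Sfull (p + t) (q + t)
      rw [show p + t + (q + t) = p + q + s by omega, show p + t - (q + t) = p - q by omega] at h
      exact h
    have h2' : W (r + s) * W r = dd W (r + t) t := by
      have h := Sfull (r + t) t
      rw [show r + t + t = r + s by omega, show r + t - t = r by omega] at h
      exact h
    have h3' : W (q + r + s) * W (q - r) = dd W (q + t) (r + t) := by
      have h := Sfull (q + t) (r + t)
      rw [show q + t + (r + t) = q + r + s by omega, show q + t - (r + t) = q - r by omega] at h
      exact h
    have h4' : W (p + s) * W p = dd W (p + t) t := by
      have h := Sfull (p + t) t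
      rw [show p + t + t = p + s by omega, show p + t - t = p by omega] at h
      exact h
    have h5' : W (r + p + s) * W (r - p) = dd W (r + t) (p + t) := by
      have h := Sfull (r + t) (p + t)
      rw [show r + t + (p + t) = r + p + s by omega, show r + t - (p + t) = r - p by omega] at h
      exact h
    have h6' : W (q + s) * W q = dd W (q + t) t := by
      have h := Sfull (q + t) t
      rw [show q + t + t = q + s by omega, show q + t - t = q by omega] at h
      exact h
    have expand : W (p + q + s) * W (p - q) * W (r + s) * W r +
        W (q + r + s) * W (q - r) * W (p + s) * W p +
        W (r + p + s) * W (r - p) * W (q + s) * W q =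
        (W (p + q + s) * W (p - q)) * (W (r + s) * W r) +
        (W (q + r + s) * W (q - r)) * (W (p + s) * W p) +
        (W (r + p + s) * W (r - p)) * (W (q + s) * W q) := by ring
    rw [expand, h1', h2', h3', h4', h5', h6']
    simp only [dd]
    ring
  · -- s odd
    have h1' : W (p + q + s) * W (p - q) * W 2 = d2 W (p + t) (q + t) := by
      have h := Tfull (p + t) (q + t)
      rw [show p + t + (q + t) + 1 = p + q + s by omega,
        show p + t - (q + t) = p - q by omega] at h
      exact h
    have h2' : W (r + s) * W r * W 2 = d2 W (r + t) t := by
      have h := Tfull (r + t) t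
      rw [show r + t + t + 1 = r + s by omega, show r + t - t = r by omega] at h
      exact h
    have h3' : W (q + r + s) * W (q - r) * W 2 = d2 W (q + t) (r + t) := by
      have h := Tfull (q + t) (r + t)
      rw [show q + t + (r + t) + 1 = q + r + s by omega,
        show q + t - (r + t) = q - r by omega] at h
      exact h
    have h4' : W (p + s) * W p * W 2 = d2 W (p + t) t := by
      have h := Tfull (p + t) t
      rw [show p + t + t + 1 = p + s by omega, show p + t - t = p by omega] at h
      exact h
    have h5' : W (r + p + s) * W (r - p) * W 2 = d2 W (r + t) (p + t) := by
      have h := Tfull (r + t) (p + t)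
      rw [show r + t + (p + t) + 1 = r + p + s by omega,
        show r + t - (p + t) = r - p by omega] at h
      exact h
    have h6' : W (q + s) * W q * W 2 = d2 W (q + t) t := by
      have h := Tfull (q + t) t
      rw [show q + t + t + 1 = q + s by omega, show q + t - t = q by omega] at h
      exact h
    have key : (W (p + q + s) * W (p - q) * W (r + s) * W r +
        W (q + r + s) * W (q - r) * W (p + s) * W p +
        W (r + p + s) * W (r - p) * W (q + s) * W q) * (W 2 * W 2) = 0 := by
      have expand : (W (p + q + s) * W (p - q) * W (r + s) * W r +
          W (q + r + s) * W (q - r) * W (p + s) * W p +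
          W (r + p + s) * W (r - p) * W (q + s) * W q) * (W 2 * W 2) =
          (W (p + q + s) * W (p - q) * W 2) * (W (r + s) * W r * W 2) +
          (W (q + r + s) * W (q - r) * W 2) * (W (p + s) * W p * W 2) +
          (W (r + p + s) * W (r - p) * W 2) * (W (q + s) * W q * W 2) := by ring
      rw [expand, h1', h2', h3', h4', h5', h6']
      simp only [d2]
      ring
    rcases mul_eq_zero.mp key with h | h
    · exact h
    · exact absurd h (mul_ne_zero hb hb)

end EDSMachinery

open Classical in
/-- The sequence of division polynomial values `W(n) = ψₙ(P)` satisfies the rank-one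
elliptic net recurrence. -/
theorem division_polynomial_elliptic_net (F : Type*) [Field F]
    (E : WeierstrassCurve.Affine F) (x y : F) (h : E.Nonsingular x y)
    (P : E.Point) (hP : P = WeierstrassCurve.Affine.Point.some _ _ h)
    (hord : addOrderOf P = 0 ∨ 4 ≤ addOrderOf P)
    (W : ℤ → F) (hW : ∀ n : ℤ, W n = (E.ψ n).evalEval x y) :
    ∀ p q r s : ℤ,
      W (p + q + s) * W (p - q) * W (r + s) * W r +
        W (q + r + s) * W (q - r) * W (p + s) * W p +
        W (r + p + s) * W (r - p) * W (q + s) * W q = 0 := by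
  -- express `W` as a `normEDS` of field elements
  have hWn : ∀ n : ℤ, W n = normEDS (Polynomial.evalEvalRingHom x y E.ψ₂)
      (Polynomial.evalEvalRingHom x y (Polynomial.C E.Ψ₃))
      (Polynomial.evalEvalRingHom x y (Polynomial.C E.preΨ₄)) n := by
    intro n
    rw [hW n, WeierstrassCurve.ψ, ← map_normEDS]
    rfl
  have h0 : W 0 = 0 := by rw [hWn 0, normEDS_zero]
  have h1 : W 1 = 1 := by rw [hWn 1, normEDS_one]
  have hneg : ∀ n : ℤ, W (-n) = -W n := by
    intro n; rw [hWn (-n), hWn n, normEDS_neg]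
  have hE : ∀ m : ℤ, W (2 * m) * W 2 =
      W (m - 1) ^ 2 * W m * W (m + 2) - W (m - 2) * W m * W (m + 1) ^ 2 := by
    intro m
    simp only [hWn]
    rw [normEDS_two]
    exact normEDS_even _ _ _ m
  have hO : ∀ m : ℤ, W (2 * m + 1) = W (m + 2) * W m ^ 3 - W (m - 1) * W (m + 1) ^ 3 := by
    intro m
    simp only [hWn]
    exact normEDS_odd _ _ _ m
  -- `W 2 ≠ 0` since `P` does not have order `1` or `2`
  have hb : W 2 ≠ 0 := by
    intro hb0
    have hψ2 : W 2 = 2 * y + E.a₁ * x + E.a₃ := by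
      rw [hW 2, ψ_two]
      exact E.toAffine.evalEval_polynomialY x y
    have h2y : 2 * y + E.a₁ * x + E.a₃ = 0 := by rw [← hψ2]; exact hb0
    have hy : E.negY x y = y := by
      rw [WeierstrassCurve.Affine.negY]
      linear_combination -h2y
    have hsome : ∀ {y' : F} (h' : E.Nonsingular x y'), y' = y →
        WeierstrassCurve.Affine.Point.some _ _ h' = WeierstrassCurve.Affine.Point.some _ _ h := by
      rintro y' h' rfl
      rfl
    have hnegP : -P = P := by
      rw [hP, WeierstrassCurve.Affine.Point.neg_some]
      exact hsome _ hy
    have h2P : (2 : ℕ) • P = 0 := by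
      rw [two_nsmul]
      nth_rewrite 1 [← hnegP]
      exact neg_add_cancel P
    have hdvd : addOrderOf P ∣ 2 := addOrderOf_dvd_of_nsmul_eq_zero h2P
    rcases hord with h' | h'
    · rw [h'] at hdvd
      exact two_ne_zero (zero_dvd_iff.mp hdvd)
    · have := Nat.le_of_dvd (by norm_num) hdvd
      omega
  exact net_main W h0 h1 hneg hb hE hO
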